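/- arXiv:1309.3756 — 6 statements merged into one kernel-verified Lean document; each statement's English description precedes it below -/
import Mathlib

section
/- For any n×n matrix A, det(A) · det(A with last two rows and last two columns deleted) = det(A with last row and column deleted) · det(A with row n-1 and column n-1 deleted) − det(A with row n-1 and column n deleted) · det(A with row n and column n-1 deleted). -/
open Matrix

private lemma desnanot_key {R : Type*} [CommRing R] (m : ℕ)
    (A : Matrix (Fin (m + 2)) (Fin (m + 2)) R) :
    A.det * (A.adjugate ⟨m, by linarith⟩ ⟨m, by linarith⟩ *
        A.adjugate ⟨m + 1, by linarith⟩ ⟨m + 1, by linarith⟩ -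
      A.adjugate ⟨m, by linarith⟩ ⟨m + 1, by linarith⟩ *
        A.adjugate ⟨m + 1, by linarith⟩ ⟨m, by linarith⟩) =
    (A.det * A.det) *
      (A.submatrix (Fin.castLE (by linarith) : Fin m → Fin (m + 2))
        (Fin.castLE (by linarith) : Fin m → Fin (m + 2))).det := by
  classical
  set e : Fin m ⊕ Fin 2 ≃ Fin (m + 2) := finSumFinEquiv with he
  set D : Matrix (Fin 2) (Fin 2) R := fun a b => A.adjugate (e (Sum.inr a)) (e (Sum.inr b)) with hD
  set B : Matrix (Fin m) (Fin 2) R := fun a b => A.adjugate (e (Sum.inl a)) (e (Sum.inr b)) with hB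
  set C : Matrix (Fin (m + 2)) (Fin (m + 2)) R :=
    (fromBlocks 1 B 0 D).submatrix e.symm e.symm with hC
  have hCdet : C.det = D.det := by
    rw [hC, det_submatrix_equiv_self, det_fromBlocks_zero₂₁, det_one, one_mul]
  have hCcol : ∀ (k : Fin (m + 2)) (b : Fin 2),
      C k (e (Sum.inr b)) = A.adjugate k (e (Sum.inr b)) := by
    intro k b
    rw [hC]
    simp only [submatrix_apply, Equiv.symm_apply_apply]
    rcases h : e.symm k with a | a
    · have hk : k = e (Sum.inl a) := by rw [← h, Equiv.apply_symm_apply]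
      rw [hk]
      rfl
    · have hk : k = e (Sum.inr a) := by rw [← h, Equiv.apply_symm_apply]
      rw [hk]
      rfl
  have hAC : (A * C).submatrix e e =
      fromBlocks (A.submatrix (fun a => e (Sum.inl a)) (fun a => e (Sum.inl a))) 0
        (fun a b => A (e (Sum.inr a)) (e (Sum.inl b))) (A.det • 1) := by
    ext x y
    rcases y with b | b
    · -- column in the first block : C has identity columns there
      have hcol : ∀ k : Fin (m + 2), C k (e (Sum.inl b)) =
          if k = e (Sum.inl b) then 1 else 0 := by
        intro k
        rw [hC]
        simp only [submatrix_apply, Equiv.symm_apply_apply]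
        rcases h : e.symm k with a | a
        · have hk : k = e (Sum.inl a) := by rw [← h, Equiv.apply_symm_apply]
          rw [hk]
          simp [fromBlocks, one_apply, Equiv.apply_eq_iff_eq]
        · have hk : k = e (Sum.inr a) := by rw [← h, Equiv.apply_symm_apply]
          rw [hk]
          have : e (Sum.inr a) ≠ e (Sum.inl b) := by
            simp [Equiv.apply_eq_iff_eq]
          simp [fromBlocks, this]
      have : (A * C) (e x) (e (Sum.inl b)) = A (e x) (e (Sum.inl b)) := by
        rw [mul_apply]
        simp only [hcol, mul_ite, mul_one, mul_zero]
        simp only [Finset.sum_ite_eq', Finset.mem_univ, if_true]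
      rcases x with a | a <;> simpa [fromBlocks] using this
    · have : (A * C) (e x) (e (Sum.inr b)) = A.det * if e x = e (Sum.inr b) then 1 else 0 := by
        rw [mul_apply]
        simp only [hCcol]
        have := congrFun (congrFun (mul_adjugate A) (e x)) (e (Sum.inr b))
        rw [mul_apply] at this
        rw [this]
        simp [one_apply]
      rcases x with a | a
      · have hne : e (Sum.inl a) ≠ e (Sum.inr b) := by simp [Equiv.apply_eq_iff_eq]
        simpa [fromBlocks, hne] using this
      · simpa [fromBlocks, one_apply, Equiv.apply_eq_iff_eq] using this
  have hdet1 : (A * C).det = (A.submatrix (fun a => e (Sum.inl a)) (fun a => e (Sum.inl a))).det *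
      (A.det * A.det) := by
    rw [← det_submatrix_equiv_self e, hAC]
    refine (det_fromBlocks_zero₁₂ ..).trans ?_
    rw [det_smul, det_one]
    simp [pow_two]
  have hmain : A.det * D.det = (A.submatrix (fun a => e (Sum.inl a)) (fun a => e (Sum.inl a))).det *
      (A.det * A.det) := by
    rw [← hdet1, det_mul, hCdet]
  -- identify the pieces
  have h0 : e (Sum.inr (0 : Fin 2)) = (⟨m, by linarith⟩ : Fin (m + 2)) := by
    rw [he]; ext; simp
  have h1 : e (Sum.inr (1 : Fin 2)) = (⟨m + 1, by linarith⟩ : Fin (m + 2)) := by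
    rw [he]; ext; simp
  have hcast : (fun a : Fin m => e (Sum.inl a)) = (Fin.castLE (by linarith) : Fin m → Fin (m + 2)) := by
    funext a; rw [he]; ext; simp
  rw [det_fin_two] at hmain
  rw [hD] at hmain
  simp only [h0, h1, hcast] at hmain
  rw [hmain]
  ring

private lemma desnanot_adj {R : Type*} [CommRing R] [IsDomain R] (m : ℕ)
    (A : Matrix (Fin (m + 2)) (Fin (m + 2)) R) (hA : A.det ≠ 0) :
    A.adjugate ⟨m, by linarith⟩ ⟨m, by linarith⟩ *
        A.adjugate ⟨m + 1, by linarith⟩ ⟨m + 1, by linarith⟩ -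
      A.adjugate ⟨m, by linarith⟩ ⟨m + 1, by linarith⟩ *
        A.adjugate ⟨m + 1, by linarith⟩ ⟨m, by linarith⟩ =
    A.det * (A.submatrix (Fin.castLE (by linarith) : Fin m → Fin (m + 2))
        (Fin.castLE (by linarith) : Fin m → Fin (m + 2))).det := by
  apply mul_left_cancel₀ hA
  rw [desnanot_key, mul_assoc]

private lemma desnanot_generic {R : Type*} [CommRing R] [IsDomain R] (m : ℕ)
    (A : Matrix (Fin (m + 2)) (Fin (m + 2)) R) (hA : A.det ≠ 0) :
    A.det * (A.submatrix (Fin.castLE (by linarith) : Fin m → Fin (m + 2))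
        (Fin.castLE (by linarith) : Fin m → Fin (m + 2))).det =
      (A.submatrix ((⟨m + 1, by linarith⟩ : Fin (m + 2)).succAbove)
          ((⟨m + 1, by linarith⟩ : Fin (m + 2)).succAbove)).det *
        (A.submatrix ((⟨m, by linarith⟩ : Fin (m + 2)).succAbove)
          ((⟨m, by linarith⟩ : Fin (m + 2)).succAbove)).det -
      (A.submatrix ((⟨m, by linarith⟩ : Fin (m + 2)).succAbove)
          ((⟨m + 1, by linarith⟩ : Fin (m + 2)).succAbove)).det *
        (A.submatrix ((⟨m + 1, by linarith⟩ : Fin (m + 2)).succAbove)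
          ((⟨m, by linarith⟩ : Fin (m + 2)).succAbove)).det := by
  have h := desnanot_adj m A hA
  rw [Matrix.adjugate_fin_succ_eq_det_submatrix, Matrix.adjugate_fin_succ_eq_det_submatrix,
    Matrix.adjugate_fin_succ_eq_det_submatrix, Matrix.adjugate_fin_succ_eq_det_submatrix] at h
  rw [← h]
  have e1 : ((-1 : R)) ^ ((m : ℕ) + m) = 1 := by
    rw [← two_mul, pow_mul]; norm_num
  have e2 : ((-1 : R)) ^ ((m + 1 : ℕ) + (m + 1)) = 1 := by
    rw [show (m + 1) + (m + 1) = 2 * (m + 1) by ring, pow_mul]; norm_num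
  have e3 : ((-1 : R)) ^ ((m + 1 : ℕ) + m) = -1 := by
    rw [show (m + 1) + m = 2 * m + 1 by ring, pow_succ, pow_mul]; norm_num
  have e4 : ((-1 : R)) ^ ((m : ℕ) + (m + 1)) = -1 := by
    rw [show m + (m + 1) = 2 * m + 1 by ring, pow_succ, pow_mul]; norm_num
  simp only [Fin.val_mk] at *
  rw [e1, e2, e3, e4]
  ring


/-- Desnanot–Jacobi (Dodgson condensation) identity: for an `n × n` matrix (`n ≥ 2`,
here `n = m + 2`), `det A · det A^{n-1,n}_{n-1,n} = det A^{n}_{n} · det A^{n-1}_{n-1}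
− det A^{n-1}_{n} · det A^{n}_{n-1}`, where superscripts/subscripts indicate deleted
rows/columns. -/
theorem desnanot_jacobi {R : Type*} [CommRing R] (m : ℕ)
    (A : Matrix (Fin (m + 2)) (Fin (m + 2)) R) :
    A.det * (A.submatrix (Fin.castLE (by omega) : Fin m → Fin (m + 2))
        (Fin.castLE (by omega) : Fin m → Fin (m + 2))).det =
      (A.submatrix ((⟨m + 1, by omega⟩ : Fin (m + 2)).succAbove)
          ((⟨m + 1, by omega⟩ : Fin (m + 2)).succAbove)).det *
        (A.submatrix ((⟨m, by omega⟩ : Fin (m + 2)).succAbove)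
          ((⟨m, by omega⟩ : Fin (m + 2)).succAbove)).det -
      (A.submatrix ((⟨m, by omega⟩ : Fin (m + 2)).succAbove)
          ((⟨m + 1, by omega⟩ : Fin (m + 2)).succAbove)).det *
        (A.submatrix ((⟨m + 1, by omega⟩ : Fin (m + 2)).succAbove)
          ((⟨m, by omega⟩ : Fin (m + 2)).succAbove)).det := by
  classical
  set X : Matrix (Fin (m + 2)) (Fin (m + 2))
      (MvPolynomial (Fin (m + 2) × Fin (m + 2)) ℤ) := mvPolynomialX _ _ ℤ with hX
  set f : MvPolynomial (Fin (m + 2) × Fin (m + 2)) ℤ →+* R :=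
    (MvPolynomial.eval₂Hom (Int.castRingHom R) fun p => A p.1 p.2) with hf
  have hmap : X.map f = A := by
    rw [hX, hf]
    exact mvPolynomialX_map_eval₂ _ A
  have hgen := desnanot_generic m X (det_mvPolynomialX_ne_zero _ ℤ)
  have happ := congrArg f hgen
  simpa only [map_sub, _root_.map_mul, RingHom.map_det, RingHom.mapMatrix_apply,
    ← Matrix.submatrix_map, hmap] using happ
end

section
/- Let w_ν and w_λ satisfy the Riccati–Schrödinger equations −w' + w² = V − E_ν and −w' + w² = V − E_λ respectively on an interval, with E_λ ≠ E_ν and w_ν ≠ w_λ pointwise. Then the Darboux–Bäcklund transform w_λ^{(ν)} = −w_ν + (E_λ − E_ν)/(w_ν − w_λ) satisfies −(w_λ^{(ν)})' + (w_λ^{(ν)})² = V^{(ν)} − E_λ, where V^{(ν)} = V + 2 w_ν'. -/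
/-- The Darboux–Bäcklund transform `w_lam^{(nu)} = −w_nu + (E_lam − E_nu)/(w_nu − w_lam)`
maps solutions of the Riccati–Schrödinger equation for `V` at energy `E_lam` to solutions
for the transformed potential `V^{(nu)} = V + 2·w_nu'` at the same energy. -/
theorem darboux_backlund_riccati (I : Set ℝ) (hI : IsOpen I)
    (V wnu wlam : ℝ → ℝ) (Enu Elam : ℝ) (hE : Elam ≠ Enu)
    (hwnu : ContDiff ℝ 1 wnu) (hwlam : ContDiff ℝ 1 wlam)
    (hne : ∀ x ∈ I, wnu x ≠ wlam x)
    (hnu : ∀ x ∈ I, -deriv wnu x + wnu x ^ 2 = V x - Enu)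
    (hlam : ∀ x ∈ I, -deriv wlam x + wlam x ^ 2 = V x - Elam) :
    ∀ x ∈ I,
      -deriv (fun t => -wnu t + (Elam - Enu) / (wnu t - wlam t)) x +
          (-wnu x + (Elam - Enu) / (wnu x - wlam x)) ^ 2 =
        (V x + 2 * deriv wnu x) - Elam := by
  intro x hx
  have hdnu : HasDerivAt wnu (deriv wnu x) x :=
    (hwnu.differentiable one_ne_zero x).hasDerivAt
  have hdlam : HasDerivAt wlam (deriv wlam x) x :=
    (hwlam.differentiable one_ne_zero x).hasDerivAt
  have hden : wnu x - wlam x ≠ 0 := sub_ne_zero.mpr (hne x hx)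
  have hdiv : HasDerivAt (fun t => (Elam - Enu) / (wnu t - wlam t))
      (-((Elam - Enu) * (deriv wnu x - deriv wlam x)) / (wnu x - wlam x) ^ 2) x := by
    have := ((hasDerivAt_const x (Elam - Enu)).div (hdnu.sub hdlam) hden)
    simp only [zero_mul, zero_sub, Pi.sub_apply] at this
    exact this
  have htot : HasDerivAt (fun t => -wnu t + (Elam - Enu) / (wnu t - wlam t))
      (-deriv wnu x + -((Elam - Enu) * (deriv wnu x - deriv wlam x)) / (wnu x - wlam x) ^ 2)
      x := hdnu.neg.add hdiv
  rw [htot.deriv]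
  have h1 : deriv wnu x = wnu x ^ 2 - (V x - Enu) := by linarith [hnu x hx]
  have h2 : deriv wlam x = wlam x ^ 2 - (V x - Elam) := by linarith [hlam x hx]
  rw [h1, h2]
  field_simp
  ring
end

section
/- Let ψ_ν, ψ_λ be nonvanishing solutions of ψ'' + (E − V)ψ = 0 for energies E_ν and E_λ respectively on an interval. Then the function ψ_λ^{(ν)}(x) = W(ψ_ν, ψ_λ | x)/ψ_ν(x) satisfies the Schrödinger equation (ψ_λ^{(ν)})'' + (E_λ − V^{(ν)}) ψ_λ^{(ν)} = 0 with V^{(ν)} = V − 2 (log ψ_ν)''. -/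
/-- Darboux–Crum formula: if `ψ_nu`, `ψ_lam` solve the Schrödinger equation for `V`
at energies `E_nu`, `E_lam`, with `ψ_nu` nonvanishing, then
`ψ_lam^{(nu)} = W(ψ_nu, ψ_lam)/ψ_nu` solves the Schrödinger equation for
`V^{(nu)} = V − 2(log ψ_nu)''` at energy `E_lam`. -/
theorem darboux_crum_one_step (I : Set ℝ) (hI : IsOpen I)
    (V psinu psilam : ℝ → ℝ) (Enu Elam : ℝ)
    (hV : ContinuousOn V I)
    (hnu : ContDiff ℝ 2 psinu) (hlam : ContDiff ℝ 2 psilam)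
    (hnu0 : ∀ x ∈ I, psinu x ≠ 0)
    (hodenu : ∀ x ∈ I, iteratedDeriv 2 psinu x + (Enu - V x) * psinu x = 0)
    (hodelam : ∀ x ∈ I, iteratedDeriv 2 psilam x + (Elam - V x) * psilam x = 0) :
    ∀ x ∈ I,
      iteratedDeriv 2
          (fun t => (psinu t * deriv psilam t - deriv psinu t * psilam t) / psinu t) x +
        (Elam - (V x - 2 * deriv (fun t => deriv psinu t / psinu t) x)) *
          ((psinu x * deriv psilam x - deriv psinu x * psilam x) / psinu x) = 0 := by
  intro x hx
  have hnu1 : Differentiable ℝ psinu := hnu.differentiable (by norm_num)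
  have hlam1 : Differentiable ℝ psilam := hlam.differentiable (by norm_num)
  have hnud : Differentiable ℝ (deriv psinu) := by
    have h2 : ContDiff ℝ ((1 : ℕ∞)+1) psinu := by norm_num at hnu ⊢; exact hnu
    exact (contDiff_succ_iff_deriv.mp h2).2.2.differentiable (by norm_num)
  have hlamd : Differentiable ℝ (deriv psilam) := by
    have h2 : ContDiff ℝ ((1 : ℕ∞)+1) psilam := by norm_num at hlam ⊢; exact hlam
    exact (contDiff_succ_iff_deriv.mp h2).2.2.differentiable (by norm_num)
  have hit : ∀ f : ℝ → ℝ, iteratedDeriv 2 f = deriv (deriv f) := by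
    intro f; simp [iteratedDeriv_succ, iteratedDeriv_one]
  have hodenu' : ∀ t ∈ I, deriv (deriv psinu) t = (V t - Enu) * psinu t := by
    intro t ht
    have := hodenu t ht
    rw [hit] at this
    linarith [this]
  have hodelam' : ∀ t ∈ I, deriv (deriv psilam) t = (V t - Elam) * psilam t := by
    intro t ht
    have := hodelam t ht
    rw [hit] at this
    linarith [this]
  set f : ℝ → ℝ := fun t => (psinu t * deriv psilam t - deriv psinu t * psilam t) / psinu t
    with hf
  set g : ℝ → ℝ := fun t =>
      (Enu - Elam) * psilam t -
        (psinu t * deriv psilam t - deriv psinu t * psilam t) * deriv psinu t / (psinu t)^2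
    with hg
  -- Wronskian derivative
  have hW : ∀ t, HasDerivAt (fun s => psinu s * deriv psilam s - deriv psinu s * psilam s)
      (psinu t * deriv (deriv psilam) t - deriv (deriv psinu) t * psilam t) t := by
    intro t
    have h := (((hnu1 t).hasDerivAt.mul (hlamd t).hasDerivAt)).sub
      (((hnud t).hasDerivAt.mul (hlam1 t).hasDerivAt))
    refine h.congr_deriv ?_; ring
  have hfd : ∀ t ∈ I, HasDerivAt f (g t) t := by
    intro t ht
    have hW' : HasDerivAt (fun s => psinu s * deriv psilam s - deriv psinu s * psilam s)
        ((Enu - Elam) * (psinu t * psilam t)) t := by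
      have := hW t
      rw [hodenu' t ht, hodelam' t ht] at this
      convert this using 1; ring
    have h := hW'.div (hnu1 t).hasDerivAt (hnu0 t ht)
    have hne := hnu0 t ht
    refine h.congr_deriv ?_
    simp only [hg]
    field_simp
  -- deriv f = g near x
  have hev : deriv f =ᶠ[nhds x] g := by
    filter_upwards [hI.mem_nhds hx] with t ht using (hfd t ht).deriv
  -- derivative of g at x
  have hNum : HasDerivAt
      (fun s => (psinu s * deriv psilam s - deriv psinu s * psilam s) * deriv psinu s)
      ((psinu x * deriv (deriv psilam) x - deriv (deriv psinu) x * psilam x) * deriv psinu x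
        + (psinu x * deriv psilam x - deriv psinu x * psilam x) * deriv (deriv psinu) x) x :=
    (hW x).mul (hnud x).hasDerivAt
  have hDen : HasDerivAt (fun s => (psinu s)^2) (2 * psinu x * deriv psinu x) x := by
    have := (hnu1 x).hasDerivAt.pow 2
    refine this.congr_deriv ?_; norm_num
  have hne : psinu x ≠ 0 := hnu0 x hx
  have hne2 : (psinu x)^2 ≠ 0 := pow_ne_zero 2 hne
  have hgd : HasDerivAt g
      ((Enu - Elam) * deriv psilam x -
        (((psinu x * deriv (deriv psilam) x - deriv (deriv psinu) x * psilam x) * deriv psinu x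
            + (psinu x * deriv psilam x - deriv psinu x * psilam x) * deriv (deriv psinu) x)
            * (psinu x)^2
          - (psinu x * deriv psilam x - deriv psinu x * psilam x) * deriv psinu x
            * (2 * psinu x * deriv psinu x)) / ((psinu x)^2)^2) x := by
    exact ((hlam1 x).hasDerivAt.const_mul (Enu - Elam)).sub (hNum.div hDen hne2)
  -- derivative of log-derivative term
  have hlog : deriv (fun t => deriv psinu t / psinu t) x =
      (deriv (deriv psinu) x * psinu x - deriv psinu x * deriv psinu x) / (psinu x)^2 :=
    ((hnud x).hasDerivAt.div (hnu1 x).hasDerivAt hne).deriv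
  have key : iteratedDeriv 2 f x = deriv g x := by
    rw [hit, hev.deriv_eq]
  rw [key, hgd.deriv, hlog, hodenu' x hx, hodelam' x hx]
  field_simp
  ring
end

section
/- Suppose there exists a continuously differentiable function w on an interval I satisfying the Riccati inequality −w'(x) + w(x)² ≤ G(x) for all x ∈ I. Then every nontrivial solution of ψ'' − Gψ = 0 on I has at most one zero on I. -/
open Set

private lemma iteratedDeriv_two_eq (f : ℝ → ℝ) : iteratedDeriv 2 f = deriv (deriv f) := by
  rw [show (2:ℕ) = 1+1 from rfl, iteratedDeriv_succ, iteratedDeriv_one]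

private lemma riccati_aux (I : Set ℝ) (hI : I.OrdConnected)
    (G w : ℝ → ℝ) (hw : ContDiff ℝ 1 w)
    (hric : ∀ x ∈ I, -deriv w x + w x ^ 2 ≤ G x)
    (psi : ℝ → ℝ) (hpsi : ContDiff ℝ 2 psi)
    (hode : ∀ x ∈ I, iteratedDeriv 2 psi x - G x * psi x = 0)
    (a b p : ℝ) (ha : a ∈ I) (hb : b ∈ I) (hab : a < b)
    (hpa : psi a = 0) (hpb : psi b = 0) (hp : p ∈ Set.Icc a b) (hpp : 0 < psi p) :
    False := by
  have hIcc : Set.Icc a b ⊆ I := hI.out ha hb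
  -- smoothness facts
  have hpsid : Differentiable ℝ psi := hpsi.differentiable (by norm_num)
  have hpsi1 : ContDiff ℝ 1 (deriv psi) := by
    have h2 : ContDiff ℝ (1+1) psi := by norm_num; exact hpsi
    exact (contDiff_succ_iff_deriv.mp h2).2.2
  have hpsid' : Differentiable ℝ (deriv psi) := hpsi1.differentiable one_ne_zero
  have hpsic : Continuous psi := hpsid.continuous
  have hwd : Differentiable ℝ w := hw.differentiable one_ne_zero
  have hwc : Continuous w := hwd.continuous
  -- antiderivative of w
  set W : ℝ → ℝ := fun x => ∫ t in (0:ℝ)..x, w t with hWdef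
  have hW : ∀ x : ℝ, HasDerivAt W (w x) x := by
    intro x
    exact intervalIntegral.integral_hasDerivAt_right (hwc.intervalIntegrable 0 x)
      (hwc.stronglyMeasurable.stronglyMeasurableAtFilter) hwc.continuousAt
  have hWc : Continuous W := Differentiable.continuous (fun x => (hW x).differentiableAt)
  set u : ℝ → ℝ := fun x => psi x * Real.exp (W x) with hudef
  set v : ℝ → ℝ := fun x => (deriv psi x + w x * psi x) * Real.exp (-W x) with hvdef
  have huc : Continuous u := hpsic.mul (Real.continuous_exp.comp hWc)
  have hvc : Continuous v :=
    ((hpsid'.continuous.add (hwc.mul hpsic)).mul (Real.continuous_exp.comp hWc.neg))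
  have hu : ∀ x : ℝ, HasDerivAt u ((deriv psi x + w x * psi x) * Real.exp (W x)) x := by
    intro x
    have h1 : HasDerivAt (fun x => Real.exp (W x)) (Real.exp (W x) * w x) x := (hW x).exp
    have := ((hpsid x).hasDerivAt.fun_mul h1)
    exact this.congr_deriv (by ring)
  have hv : ∀ x : ℝ, HasDerivAt v
      ((iteratedDeriv 2 psi x + deriv w x * psi x - w x ^ 2 * psi x) * Real.exp (-W x)) x := by
    intro x
    have h1 : HasDerivAt (fun x => Real.exp (-W x)) (Real.exp (-W x) * (-w x)) x :=
      ((hW x).neg).exp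
    have h2 : HasDerivAt (fun x => deriv psi x + w x * psi x)
        (iteratedDeriv 2 psi x + (deriv w x * psi x + w x * deriv psi x)) x := by
      have hdd : HasDerivAt (deriv psi) (iteratedDeriv 2 psi x) x := by
        rw [iteratedDeriv_two_eq]; exact (hpsid' x).hasDerivAt
      exact hdd.add ((hwd x).hasDerivAt.mul (hpsid x).hasDerivAt)
    have := h2.fun_mul h1
    exact this.congr_deriv (by ring)
  -- nonneg derivative of v on I where psi ≥ 0
  have hvderiv : ∀ x ∈ I, 0 ≤ psi x → 0 ≤ deriv v x := by
    intro x hxI hx0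
    rw [(hv x).deriv]
    have hq : 0 ≤ G x + deriv w x - w x ^ 2 := by have := hric x hxI; linarith
    have hpsi2 : iteratedDeriv 2 psi x = G x * psi x := by have := hode x hxI; linarith
    rw [hpsi2]
    have : 0 ≤ (G x + deriv w x - w x ^ 2) * psi x := mul_nonneg hq hx0
    have hE := (Real.exp_pos (-W x)).le
    nlinarith [Real.exp_pos (-W x)]
  -- β : first zero to the right of p
  have hclosed : IsClosed {x : ℝ | psi x = 0} := isClosed_eq hpsic continuous_const
  set S : Set ℝ := Set.Icc p b ∩ {x | psi x = 0} with hSdef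
  have hSne : S.Nonempty := ⟨b, ⟨hp.2, le_rfl⟩, hpb⟩
  have hSbdd : BddBelow S := ⟨p, fun x hx => hx.1.1⟩
  set β := sInf S with hβdef
  have hβS : β ∈ S := ((isClosed_Icc.inter hclosed).csInf_mem hSne hSbdd)
  have hpβ : p < β := by
    rcases lt_or_eq_of_le hβS.1.1 with h | h
    · exact h
    · exact absurd hβS.2 (by rw [← h]; exact ne_of_gt hpp)
  have hnozeroR : ∀ x ∈ Set.Ico p β, psi x ≠ 0 := by
    intro x hx h0
    exact absurd (csInf_le hSbdd ⟨⟨hx.1, le_trans hx.2.le hβS.1.2⟩, h0⟩) (not_le.mpr hx.2)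
  have hposR : ∀ x ∈ Set.Ico p β, 0 < psi x := by
    intro x hx
    rcases lt_trichotomy (psi x) 0 with h | h | h
    · exfalso
      have hpx : p ≤ x := hx.1
      obtain ⟨z, hz, hz0⟩ := intermediate_value_Icc' hpx (hpsic.continuousOn)
        (⟨h.le, hpp.le⟩ : (0:ℝ) ∈ Set.Icc (psi x) (psi p))
      exact hnozeroR z ⟨hz.1, lt_of_le_of_lt hz.2 hx.2⟩ hz0
    · exact absurd h (hnozeroR x hx)
    · exact h
  -- α : last zero to the left of p
  set T : Set ℝ := Set.Icc a p ∩ {x | psi x = 0} with hTdef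
  have hTne : T.Nonempty := ⟨a, ⟨le_rfl, hp.1⟩, hpa⟩
  have hTbdd : BddAbove T := ⟨p, fun x hx => hx.1.2⟩
  set α := sSup T with hαdef
  have hαT : α ∈ T := ((isClosed_Icc.inter hclosed).csSup_mem hTne hTbdd)
  have hαp : α < p := by
    rcases lt_or_eq_of_le hαT.1.2 with h | h
    · exact h
    · exact absurd hαT.2 (by rw [h]; exact ne_of_gt hpp)
  have hnozeroL : ∀ x ∈ Set.Ioc α p, psi x ≠ 0 := by
    intro x hx h0
    exact absurd (le_csSup hTbdd ⟨⟨le_trans hαT.1.1 hx.1.le, hx.2⟩, h0⟩) (not_le.mpr hx.1)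
  have hposL : ∀ x ∈ Set.Ioc α p, 0 < psi x := by
    intro x hx
    rcases lt_trichotomy (psi x) 0 with h | h | h
    · exfalso
      have hxp : x ≤ p := hx.2
      obtain ⟨z, hz, hz0⟩ := intermediate_value_Icc hxp (hpsic.continuousOn)
        (⟨h.le, hpp.le⟩ : (0:ℝ) ∈ Set.Icc (psi x) (psi p))
      exact hnozeroL z ⟨lt_of_lt_of_le hx.1 hz.1, hz.2⟩ hz0
    · exact absurd h (hnozeroL x hx)
    · exact h
  -- psi ≥ 0 on [α, β]
  have hαI : α ∈ Set.Icc a b := ⟨hαT.1.1, le_trans hαT.1.2 hp.2⟩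
  have hβI : β ∈ Set.Icc a b := ⟨le_trans hp.1 hβS.1.1, hβS.1.2⟩
  have hsubab : Set.Icc α β ⊆ Set.Icc a b := Set.Icc_subset_Icc hαI.1 hβI.2
  have hsubI : Set.Icc α β ⊆ I := fun x hx => hIcc (hsubab hx)
  have hnn : ∀ x ∈ Set.Icc α β, 0 ≤ psi x := by
    intro x hx
    rcases le_or_gt x p with h | h
    · rcases eq_or_lt_of_le hx.1 with h' | h'
      · rw [← h']; exact le_of_eq hαT.2.symm
      · exact (hposL x ⟨h', h⟩).le
    · rcases eq_or_lt_of_le hx.2 with h' | h'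
      · rw [h']; exact le_of_eq hβS.2.symm
      · exact (hposR x ⟨h.le, h'⟩).le
  -- v monotone on [α, β]
  have hvmono : MonotoneOn v (Set.Icc α β) := by
    apply monotoneOn_of_deriv_nonneg (convex_Icc α β) hvc.continuousOn
      (fun x _ => (hv x).differentiableAt.differentiableWithinAt)
    intro x hx
    rw [interior_Icc] at hx
    exact hvderiv x (hsubI ⟨hx.1.le, hx.2.le⟩) (hnn x ⟨hx.1.le, hx.2.le⟩)
  -- MVT on [α, p] for u
  obtain ⟨ξ, hξ, hξslope⟩ := exists_hasDerivAt_eq_slope u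
    (fun x => (deriv psi x + w x * psi x) * Real.exp (W x)) hαp huc.continuousOn
    (fun x _ => hu x)
  have hpsiα : psi α = 0 := hαT.2
  have huα : u α = 0 := by simp [hudef, hpsiα]
  have hpsiβ : psi β = 0 := hβS.2
  have huβ : u β = 0 := by simp [hudef, hpsiβ]
  have hup : 0 < u p := mul_pos hpp (Real.exp_pos _)
  have hslope_pos : 0 < (u p - u α) / (p - α) := by
    apply div_pos; · rw [huα]; linarith
    · linarith
  have hvξ : 0 < v ξ := by
    have h0 : 0 < (deriv psi ξ + w ξ * psi ξ) * Real.exp (W ξ) := hξslope ▸ hslope_pos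
    have h1 : 0 < deriv psi ξ + w ξ * psi ξ := by
      by_contra h
      push_neg at h
      have := mul_nonpos_of_nonpos_of_nonneg h (Real.exp_pos (W ξ)).le
      linarith
    exact mul_pos h1 (Real.exp_pos _)
  -- v > 0 on [ξ, β], hence u strictly increasing there
  have hξαβ : ξ ∈ Set.Icc α β := ⟨hξ.1.le, le_trans hξ.2.le hpβ.le⟩
  have hξβ : ξ < β := lt_trans hξ.2 hpβ
  have hvpos : ∀ x ∈ Set.Icc ξ β, 0 < v x := by
    intro x hx
    exact lt_of_lt_of_le hvξ
      (hvmono hξαβ ⟨le_trans hξαβ.1 hx.1, hx.2⟩ hx.1)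
  have hstrict : StrictMonoOn u (Set.Icc ξ β) := by
    apply strictMonoOn_of_deriv_pos (convex_Icc ξ β) huc.continuousOn
    intro x hx
    rw [interior_Icc] at hx
    rw [(hu x).deriv]
    have hvpx := hvpos x ⟨hx.1.le, hx.2.le⟩
    have h1 : 0 < deriv psi x + w x * psi x := by
      by_contra h
      push_neg at h
      have := mul_nonpos_of_nonpos_of_nonneg h (Real.exp_pos (-W x)).le
      simp only [hvdef] at hvpx
      linarith
    exact mul_pos h1 (Real.exp_pos _)
  have hlt : u ξ < u β := hstrict ⟨le_rfl, hξβ.le⟩ ⟨hξβ.le, le_rfl⟩ hξβ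
  have huξ : 0 < u ξ := mul_pos (hposL ξ ⟨hξ.1, hξ.2.le⟩) (Real.exp_pos _)
  linarith [huβ ▸ hlt]

private lemma propagate_zero (I : Set ℝ) (hI : I.OrdConnected) (G : ℝ → ℝ)
    (hG : ContinuousOn G I)
    (psi : ℝ → ℝ) (hpsi : ContDiff ℝ 2 psi)
    (hode : ∀ x ∈ I, iteratedDeriv 2 psi x - G x * psi x = 0)
    (b c : ℝ) (hb : b ∈ I) (hc : c ∈ I) (hbc : b ≤ c)
    (h0 : psi b = 0) (h0' : deriv psi b = 0) : psi c = 0 := by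
  have hIcc : Set.Icc b c ⊆ I := hI.out hb hc
  have hpsid : Differentiable ℝ psi := hpsi.differentiable (by norm_num)
  have hpsi1 : ContDiff ℝ 1 (deriv psi) := by
    have h2 : ContDiff ℝ (1+1) psi := by norm_num; exact hpsi
    exact (contDiff_succ_iff_deriv.mp h2).2.2
  have hpsid' : Differentiable ℝ (deriv psi) := hpsi1.differentiable one_ne_zero
  obtain ⟨M, hM⟩ := (isCompact_Icc (a := b) (b := c)).exists_bound_of_continuousOn
    (hG.mono hIcc)
  set K : ℝ := max 1 M with hKdef
  set f : ℝ → ℝ × ℝ := fun t => (psi t, deriv psi t) with hfdef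
  have hfc : ContinuousOn f (Set.Icc b c) :=
    (hpsid.continuous.prodMk hpsid'.continuous).continuousOn
  have hfd : ∀ t ∈ Set.Ico b c,
      HasDerivWithinAt f (deriv psi t, G t * psi t) (Set.Ici t) t := by
    intro t ht
    have htI : t ∈ I := hIcc ⟨ht.1, ht.2.le⟩
    have h2 : deriv (deriv psi) t = G t * psi t := by
      have := hode t htI
      rw [iteratedDeriv_two_eq] at this
      linarith
    have := ((hpsid t).hasDerivAt.prodMk (h2 ▸ (hpsid' t).hasDerivAt))
    exact this.hasDerivWithinAt
  have hbound : ∀ t ∈ Set.Ico b c, ‖(deriv psi t, G t * psi t)‖ ≤ K * ‖f t‖ + 0 := by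
    intro t ht
    have htI : t ∈ Set.Icc b c := ⟨ht.1, ht.2.le⟩
    have hGt : |G t| ≤ M := by simpa [Real.norm_eq_abs] using hM t htI
    have hK1 : (1:ℝ) ≤ K := le_max_left 1 M
    have hKM : M ≤ K := le_max_right 1 M
    have hfnorm : ‖f t‖ = max |psi t| |deriv psi t| := by
      simp [hfdef, Prod.norm_def, Real.norm_eq_abs]
    rw [Prod.norm_def, hfnorm]
    simp only [Real.norm_eq_abs, add_zero]
    have h1 : |deriv psi t| ≤ K * max |psi t| |deriv psi t| := by
      calc |deriv psi t| ≤ max |psi t| |deriv psi t| := le_max_right _ _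
        _ ≤ K * max |psi t| |deriv psi t| :=
          le_mul_of_one_le_left (le_max_of_le_left (abs_nonneg _)) hK1
    have h2 : |G t * psi t| ≤ K * max |psi t| |deriv psi t| := by
      rw [abs_mul]
      calc |G t| * |psi t| ≤ K * |psi t| :=
            mul_le_mul_of_nonneg_right (le_trans hGt hKM) (abs_nonneg _)
        _ ≤ K * max |psi t| |deriv psi t| :=
            mul_le_mul_of_nonneg_left (le_max_left _ _)
              (le_trans zero_le_one hK1)
    exact max_le h1 h2
  have hfb : ‖f b‖ ≤ 0 := by simp [hfdef, h0, h0', Prod.norm_def]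
  have := norm_le_gronwallBound_of_norm_deriv_right_le hfc hfd hfb hbound c
    ⟨hbc, le_rfl⟩
  rw [gronwallBound_ε0] at this
  simp only [zero_mul] at this
  have hfc0 : f c = 0 := norm_le_zero_iff.mp this
  have := congrArg Prod.fst hfc0
  simpa [hfdef] using this

private lemma propagate_zero_backward (I : Set ℝ) (hI : I.OrdConnected) (G : ℝ → ℝ)
    (hG : ContinuousOn G I)
    (psi : ℝ → ℝ) (hpsi : ContDiff ℝ 2 psi)
    (hode : ∀ x ∈ I, iteratedDeriv 2 psi x - G x * psi x = 0)
    (a c : ℝ) (ha : a ∈ I) (hc : c ∈ I) (hca : c ≤ a)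
    (h0 : psi a = 0) (h0' : deriv psi a = 0) : psi c = 0 := by
  set J : Set ℝ := Neg.neg ⁻¹' I with hJdef
  have hJ : J.OrdConnected := by
    constructor
    intro x hx y hy z hz
    exact hI.out hy hx ⟨neg_le_neg hz.2, neg_le_neg hz.1⟩
  have hcomp2 : ∀ g : ℝ → ℝ, ∀ x : ℝ,
      iteratedDeriv 2 (fun y => g (-y)) x = iteratedDeriv 2 g (-x) := by
    intro g x
    rw [iteratedDeriv_two_eq, iteratedDeriv_two_eq]
    have hd1 : deriv (fun y => g (-y)) = fun y => -deriv g (-y) :=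
      funext (fun y => deriv_comp_neg g y)
    rw [hd1]
    rw [deriv.fun_neg]
    rw [deriv_comp_neg (deriv g) x]
    ring
  have := propagate_zero J hJ (fun x => G (-x))
    (hG.comp continuous_neg.continuousOn (fun x hx => hx))
    (fun x => psi (-x)) (hpsi.comp (contDiff_id.neg))
    (fun x hx => by
      rw [hcomp2 psi x]
      exact hode (-x) hx)
    (-a) (-c) (by simpa [hJdef] using ha) (by simpa [hJdef] using hc)
    (by linarith) (by simpa using h0)
    (by rw [deriv_comp_neg psi (-a)]; simp [h0'])
  simpa using this

/-- Disconjugacy criterion: if the Riccati inequality `−w' + w² ≤ G` has a `C¹`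
solution on an interval `I`, then every nontrivial solution of `ψ'' − Gψ = 0` on `I`
has at most one zero in `I`. -/
theorem disconjugacy_of_riccati_subsolution (I : Set ℝ) (hI : I.OrdConnected)
    (G w : ℝ → ℝ) (hG : ContinuousOn G I) (hw : ContDiff ℝ 1 w)
    (hric : ∀ x ∈ I, -deriv w x + w x ^ 2 ≤ G x)
    (psi : ℝ → ℝ) (hpsi : ContDiff ℝ 2 psi)
    (hode : ∀ x ∈ I, iteratedDeriv 2 psi x - G x * psi x = 0)
    (hnontriv : ∃ x ∈ I, psi x ≠ 0) :
    Set.Subsingleton {x ∈ I | psi x = 0} := by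
  have hpsid : Differentiable ℝ psi := hpsi.differentiable (by norm_num)
  have key : ∀ a b : ℝ, a ∈ I → b ∈ I → psi a = 0 → psi b = 0 → a < b → False := by
    intro a b ha hb hpa hpb hab
    by_cases hall : ∀ z ∈ Set.Icc a b, psi z = 0
    · -- psi vanishes identically on [a,b]; propagate the zero to the witness point
      obtain ⟨c, hcI, hc⟩ := hnontriv
      -- derivative vanishes at a and b
      have hda : deriv psi a = 0 := by
        have h1 : HasDerivWithinAt psi (deriv psi a) (Set.Icc a b) a :=
          (hpsid a).hasDerivAt.hasDerivWithinAt
        have h2 : HasDerivWithinAt psi 0 (Set.Icc a b) a :=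
          (hasDerivWithinAt_const a (Set.Icc a b) (0:ℝ)).congr hall (hall a ⟨le_rfl, hab.le⟩)
        have hu := uniqueDiffOn_Icc hab a ⟨le_rfl, hab.le⟩
        rw [← h1.derivWithin hu, h2.derivWithin hu]
      have hdb : deriv psi b = 0 := by
        have h1 : HasDerivWithinAt psi (deriv psi b) (Set.Icc a b) b :=
          (hpsid b).hasDerivAt.hasDerivWithinAt
        have h2 : HasDerivWithinAt psi 0 (Set.Icc a b) b :=
          (hasDerivWithinAt_const b (Set.Icc a b) (0:ℝ)).congr hall (hall b ⟨hab.le, le_rfl⟩)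
        have hu := uniqueDiffOn_Icc hab b ⟨hab.le, le_rfl⟩
        rw [← h1.derivWithin hu, h2.derivWithin hu]
      rcases le_or_gt c a with hca | hac
      · exact hc (propagate_zero_backward I hI G hG psi hpsi hode a c ha hcI hca hpa hda)
      · rcases le_or_gt b c with hbc | hcb
        · exact hc (propagate_zero I hI G hG psi hpsi hode b c hb hcI hbc hpb hdb)
        · exact hc (hall c ⟨hac.le, hcb.le⟩)
    · push_neg at hall
      obtain ⟨p, hp, hpne⟩ := hall
      rcases lt_or_gt_of_ne hpne with hneg | hpos
      · -- apply the aux lemma to -psi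
        refine riccati_aux I hI G w hw hric (fun x => -psi x) hpsi.neg ?_
          a b p ha hb hab (by simp [hpa]) (by simp [hpb]) hp (by simpa using hneg)
        intro x hx
        have h1 := hode x hx
        have h2 : iteratedDeriv 2 (fun x => -psi x) x = -iteratedDeriv 2 psi x :=
          iteratedDeriv_neg 2 psi x
        rw [h2]
        ring_nf
        ring_nf at h1
        linarith
      · exact riccati_aux I hI G w hw hric psi hpsi hode a b p ha hb hab hpa hpb hp hpos
  intro x hx y hy
  by_contra hne
  rcases lt_or_gt_of_ne hne with h | h
  · exact key x y hx.1 hy.1 hx.2 hy.2 h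
  · exact key y x hy.1 hx.1 hy.2 hx.2 h
end

section
/- For the Hermite polynomials Hₙ and any nonnegative integers n, k, the k-th derivative with respect to x of the function exp(x²)·Hₙ(ix) equals i^{−k}·exp(x²)·H_{n+k}(ix), where Hₙ(ix) is interpreted via the polynomial Hₙ evaluated at the purely imaginary argument ix. -/
/-- The physicists' Hermite polynomials, via the recurrence
`H₀ = 1`, `H_{n+1}(x) = 2x·Hₙ(x) − Hₙ'(x)` (equivalent to the Rodrigues formula
`Hₙ(x) = (−1)ⁿ exp(x²) dⁿ/dxⁿ exp(−x²)`). -/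
noncomputable def physHermite : ℕ → Polynomial ℤ
  | 0 => 1
  | n + 1 => 2 * Polynomial.X * physHermite n - Polynomial.derivative (physHermite n)

lemma aeval_eq_eval_map (P : Polynomial ℤ) (z : ℂ) :
    Polynomial.aeval z P = (P.map (algebraMap ℤ ℂ)).eval z := by
  rw [Polynomial.eval_map, Polynomial.aeval_def]

lemma hasDerivAt_aux (P : Polynomial ℤ) (x : ℝ) :
    HasDerivAt (fun t : ℝ => Complex.exp ((t : ℂ) ^ 2) *
        Polynomial.aeval (Complex.I * (t : ℂ)) P)
      (Complex.exp ((x : ℂ) ^ 2) * (2 * x * Polynomial.aeval (Complex.I * x) P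
        + Complex.I * Polynomial.aeval (Complex.I * x) (Polynomial.derivative P))) x := by
  set Q := P.map (algebraMap ℤ ℂ) with hQ
  have h1 : HasDerivAt (fun z : ℂ => Complex.exp (z ^ 2)) (Complex.exp ((x:ℂ)^2) * (2 * x)) (x : ℂ) := by
    simpa using (hasDerivAt_pow 2 (x : ℂ)).cexp
  have h2 : HasDerivAt (fun z : ℂ => Q.eval (Complex.I * z))
      ((Polynomial.derivative Q).eval (Complex.I * x) * Complex.I) (x : ℂ) := by
    have := (Q.hasDerivAt (Complex.I * x)).comp (x : ℂ)
      ((hasDerivAt_id (x : ℂ)).const_mul Complex.I)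
    simpa [Function.comp_def] using this
  have h3 := (h1.mul h2).comp_ofReal
  have : HasDerivAt (fun t : ℝ => Complex.exp ((t : ℂ) ^ 2) * Q.eval (Complex.I * t))
      (Complex.exp ((x:ℂ)^2) * (2 * x) * Q.eval (Complex.I * x)
        + Complex.exp ((x:ℂ)^2) * ((Polynomial.derivative Q).eval (Complex.I * x) * Complex.I)) x := h3
  have hd : Polynomial.derivative Q = (Polynomial.derivative P).map (algebraMap ℤ ℂ) :=
    (Polynomial.derivative_map P (algebraMap ℤ ℂ))
  simp only [aeval_eq_eval_map, ← hQ, ← hd]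
  convert this using 1
  ring

/-- `dᵏ/dxᵏ (exp(x²)·Hₙ(ix)) = i^{−k}·exp(x²)·H_{n+k}(ix)` as complex-valued functions
of the real variable `x`. -/
theorem iteratedDeriv_exp_sq_hermite_imaginary (n k : ℕ) (x : ℝ) :
    iteratedDeriv k
        (fun t : ℝ => Complex.exp ((t : ℂ) ^ 2) *
          Polynomial.aeval (Complex.I * (t : ℂ)) (physHermite n)) x =
      Complex.I ^ (-(k : ℤ)) * Complex.exp ((x : ℂ) ^ 2) *
        Polynomial.aeval (Complex.I * (x : ℂ)) (physHermite (n + k)) := by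
  induction k generalizing x with
  | zero => simp
  | succ k ih =>
    rw [iteratedDeriv_succ]
    have hfun : iteratedDeriv k
        (fun t : ℝ => Complex.exp ((t : ℂ) ^ 2) *
          Polynomial.aeval (Complex.I * (t : ℂ)) (physHermite n)) =
        fun x : ℝ => Complex.I ^ (-(k : ℤ)) * (Complex.exp ((x : ℂ) ^ 2) *
          Polynomial.aeval (Complex.I * (x : ℂ)) (physHermite (n + k))) := by
      funext y; rw [ih y]; ring
    rw [hfun]
    have hder := ((hasDerivAt_aux (physHermite (n + k)) x).const_mul
      (Complex.I ^ (-(k : ℤ)))).deriv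
    rw [hder]
    have hrec : Polynomial.aeval (Complex.I * (x : ℂ)) (physHermite (n + k + 1)) =
        2 * (Complex.I * x) * Polynomial.aeval (Complex.I * x) (physHermite (n + k))
          - Polynomial.aeval (Complex.I * x) (Polynomial.derivative (physHermite (n + k))) := by
      show Polynomial.aeval _ (physHermite ((n+k) + 1)) = _
      rw [physHermite]
      simp only [map_sub, map_mul, map_ofNat, Polynomial.aeval_X]
    have hk1 : (Complex.I : ℂ) ^ (-((k:ℤ)+1)) = Complex.I ^ (-(k:ℤ)) * Complex.I⁻¹ := by
      rw [← zpow_neg_one, ← zpow_add₀ Complex.I_ne_zero]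
      congr 1
      ring
    have hfix : n + (k + 1) = n + k + 1 := by ring
    rw [hfix, hrec]
    push_cast
    have hI : Complex.I⁻¹ = -Complex.I := Complex.inv_I
    rw [hk1, hI]
    ring_nf
    rw [Complex.I_sq]
    ring
end

section
/- Let α > 1/2 and n ≥ 1 with n < α + 1. Then the function ψ_{−n}(x) = x^{−α+1/2} e^{ωx²/4} Lₙ₋₁^{−α}(−ωx²/2) satisfies the Schrödinger equation for the isotonic oscillator V(x) = (ω²/4)x² + (α+1/2)(α−1/2)/x² − ω(α+1) with eigenvalue −2nω on (0,∞). -/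
/-- The generalized Laguerre polynomial `Lₙ^α(z) = ∑_{k=0}^n (−1)^k
(α+k+1)(α+k+2)⋯(α+n) / ((n−k)! k!) · z^k`, with real parameter `α`. -/
noncomputable def genLaguerre (n : ℕ) (α : ℝ) (z : ℝ) : ℝ :=
  ∑ k ∈ Finset.range (n + 1),
    (-1) ^ k * (∏ j ∈ Finset.range (n - k), (α + k + 1 + j)) /
      ((n - k).factorial * k.factorial) * z ^ k

/-- The `k`-th coefficient of the generalized Laguerre polynomial. -/
noncomputable def lagC (m : ℕ) (γ : ℝ) (k : ℕ) : ℝ :=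
  (-1) ^ k * (∏ j ∈ Finset.range (m - k), (γ + k + 1 + j)) /
      ((m - k).factorial * k.factorial)

lemma genLaguerre_eq (m : ℕ) (γ z : ℝ) :
    genLaguerre m γ z = ∑ k ∈ Finset.range (m + 1), lagC m γ k * z ^ k := rfl

/-- First derivative of the Laguerre polynomial. -/
noncomputable def dLag (m : ℕ) (γ : ℝ) (z : ℝ) : ℝ :=
  ∑ k ∈ Finset.range (m + 1), lagC m γ k * ((k : ℝ) * z ^ (k - 1))

/-- Second derivative of the Laguerre polynomial. -/
noncomputable def d2Lag (m : ℕ) (γ : ℝ) (z : ℝ) : ℝ :=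
  ∑ k ∈ Finset.range (m + 1), lagC m γ k * ((k : ℝ) * (((k:ℕ) - 1 : ℕ) * z ^ (k - 1 - 1)))

lemma hasDerivAt_genLaguerre (m : ℕ) (γ z : ℝ) :
    HasDerivAt (genLaguerre m γ) (dLag m γ z) z := by
  have : ∀ k ∈ Finset.range (m+1), HasDerivAt (fun z : ℝ => lagC m γ k * z ^ k)
      (lagC m γ k * ((k:ℝ) * z ^ (k-1))) z := fun k _ =>
    (hasDerivAt_pow k z).const_mul _
  exact HasDerivAt.fun_sum this

lemma hasDerivAt_dLag (m : ℕ) (γ z : ℝ) :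
    HasDerivAt (dLag m γ) (d2Lag m γ z) z := by
  have : ∀ k ∈ Finset.range (m+1), HasDerivAt (fun z : ℝ => lagC m γ k * ((k:ℝ) * z ^ (k-1)))
      (lagC m γ k * ((k:ℝ) * (((k:ℕ)-1 : ℕ) * z ^ (k-1-1)))) z := by
    intro k _
    have h := (hasDerivAt_pow (k-1) z).const_mul (lagC m γ k * (k:ℝ))
    simpa [mul_assoc] using h
  exact HasDerivAt.fun_sum this

lemma coeff_rec (m : ℕ) (γ : ℝ) (k : ℕ) (hk : k < m) :
    lagC m γ (k+1) * ((k+1 : ℝ) * (γ + k + 1)) + lagC m γ k * ((m : ℝ) - k) = 0 := by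
  obtain ⟨d, rfl⟩ : ∃ d, m = k + d + 1 := ⟨m - k - 1, by omega⟩
  have h1 : k + d + 1 - (k+1) = d := by omega
  have h2 : k + d + 1 - k = d + 1 := by omega
  have hP : ∏ j ∈ Finset.range (d+1), (γ + k + 1 + j)
      = (∏ j ∈ Finset.range d, (γ + (k+1:ℕ) + 1 + j)) * (γ + k + 1) := by
    rw [Finset.prod_range_succ']
    congr 1
    · exact Finset.prod_congr rfl fun j _ => by push_cast; ring
    · push_cast; ring
  rw [lagC, lagC, h1, h2, hP]
  have hd : ((d.factorial : ℝ)) ≠ 0 := Nat.cast_ne_zero.mpr d.factorial_pos.ne'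
  have hk' : ((k.factorial : ℝ)) ≠ 0 := Nat.cast_ne_zero.mpr k.factorial_pos.ne'
  rw [Nat.factorial_succ d, Nat.factorial_succ k]
  push_cast
  field_simp
  ring

/-- The generalized Laguerre differential equation. -/
lemma laguerre_ode (m : ℕ) (γ z : ℝ) :
    z * d2Lag m γ z + (γ + 1 - z) * dLag m γ z + (m : ℝ) * genLaguerre m γ z = 0 := by
  have key : ∀ k : ℕ,
      z * (lagC m γ k * ((k:ℝ) * (((k:ℕ) - 1 : ℕ) * z ^ (k-1-1))))
      + (γ + 1 - z) * (lagC m γ k * ((k:ℝ) * z ^ (k-1)))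
      + (m:ℝ) * (lagC m γ k * z ^ k)
      = lagC m γ k * ((k:ℝ) * (γ + k)) * z ^ (k-1)
        + lagC m γ k * ((m:ℝ) - k) * z ^ k := by
    intro k
    match k with
    | 0 => simp [mul_comm]
    | 1 => push_cast; simp; ring
    | (j+2) =>
      show z * (lagC m γ (j+2) * (((j+2:ℕ):ℝ) * (((j+1:ℕ)) * z ^ j)))
        + (γ + 1 - z) * (lagC m γ (j+2) * (((j+2:ℕ):ℝ) * z ^ (j+1)))
        + (m:ℝ) * (lagC m γ (j+2) * z ^ (j+2))
        = lagC m γ (j+2) * (((j+2:ℕ):ℝ) * (γ + ((j+2:ℕ):ℝ))) * z ^ (j+1)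
          + lagC m γ (j+2) * ((m:ℝ) - ((j+2:ℕ):ℝ)) * z ^ (j+2)
      push_cast
      ring
  unfold d2Lag dLag
  rw [genLaguerre_eq, Finset.mul_sum, Finset.mul_sum, Finset.mul_sum,
    ← Finset.sum_add_distrib, ← Finset.sum_add_distrib,
    Finset.sum_congr rfl (fun k _ => key k), Finset.sum_add_distrib]
  have e1 : ∑ k ∈ Finset.range (m+1), lagC m γ k * ((k:ℝ) * (γ + k)) * z ^ (k-1)
      = ∑ k ∈ Finset.range m, lagC m γ (k+1) * (((k:ℝ)+1) * (γ + k + 1)) * z ^ k := by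
    rw [Finset.sum_range_succ']
    simp only [Nat.cast_zero, zero_mul, mul_zero, zero_add, add_zero, Nat.add_sub_cancel]
    refine Finset.sum_congr rfl fun k _ => ?_
    push_cast
    ring
  have e2 : ∑ k ∈ Finset.range (m+1), lagC m γ k * ((m:ℝ) - k) * z ^ k
      = ∑ k ∈ Finset.range m, lagC m γ k * ((m:ℝ) - k) * z ^ k := by
    rw [Finset.sum_range_succ]
    simp
  rw [e1, e2, ← Finset.sum_add_distrib]
  refine Finset.sum_eq_zero fun k hk => ?_
  have h := coeff_rec m γ k (Finset.mem_range.mp hk)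
  linear_combination z ^ k * h

section PsiDerivs
variable (m : ℕ) (γ β ω : ℝ)

noncomputable def psi (t : ℝ) : ℝ :=
  t ^ β * Real.exp (ω * t ^ 2 / 4) * genLaguerre m γ (-(ω * t ^ 2 / 2))

noncomputable def psi1 (t : ℝ) : ℝ :=
  t ^ β * Real.exp (ω * t ^ 2 / 4) *
    ((β / t + ω * t / 2) * genLaguerre m γ (-(ω * t ^ 2 / 2))
      + (-(ω * t)) * dLag m γ (-(ω * t ^ 2 / 2)))

noncomputable def psi2 (t : ℝ) : ℝ :=
  t ^ β * Real.exp (ω * t ^ 2 / 4) *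
    (((β / t + ω * t / 2) ^ 2 + (-(β / t ^ 2) + ω / 2)) * genLaguerre m γ (-(ω * t ^ 2 / 2))
      + (2 * (β / t + ω * t / 2) * (-(ω * t)) + (-ω)) * dLag m γ (-(ω * t ^ 2 / 2))
      + ω ^ 2 * t ^ 2 * d2Lag m γ (-(ω * t ^ 2 / 2)))

lemma hz (t : ℝ) : HasDerivAt (fun t : ℝ => -(ω * t ^ 2 / 2)) (-(ω * t)) t := by
  have h := (((hasDerivAt_pow 2 t).const_mul ω).div_const 2).neg
  refine h.congr_deriv ?_
  push_cast
  ring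

lemma hE (t : ℝ) : HasDerivAt (fun t : ℝ => Real.exp (ω * t ^ 2 / 4))
    (Real.exp (ω * t ^ 2 / 4) * (ω * t / 2)) t := by
  have h := (Real.hasDerivAt_exp (ω * t ^ 2 / 4)).comp t
    (((hasDerivAt_pow 2 t).const_mul ω).div_const 4)
  refine h.congr_deriv ?_
  push_cast
  ring

lemma hasDerivAt_psi1 {t : ℝ} (ht : 0 < t) : HasDerivAt (psi m γ β ω) (psi1 m γ β ω t) t := by
  have hb : HasDerivAt (fun t : ℝ => t ^ β) (β * t ^ (β - 1)) t :=
    Real.hasDerivAt_rpow_const (Or.inl ht.ne')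
  have hL : HasDerivAt (fun t : ℝ => genLaguerre m γ (-(ω * t ^ 2 / 2)))
      (dLag m γ (-(ω * t ^ 2 / 2)) * (-(ω * t))) t :=
    (hasDerivAt_genLaguerre m γ _).comp t (hz ω t)
  have h := (hb.mul (hE ω t)).mul hL
  refine h.congr_deriv ?_
  simp only [Pi.mul_apply]
  unfold psi1
  rw [Real.rpow_sub_one ht.ne']
  field_simp

lemma hasDerivAt_psi2 {t : ℝ} (ht : 0 < t) : HasDerivAt (psi1 m γ β ω) (psi2 m γ β ω t) t := by
  have hb : HasDerivAt (fun t : ℝ => t ^ β) (β * t ^ (β - 1)) t :=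
    Real.hasDerivAt_rpow_const (Or.inl ht.ne')
  have hL : HasDerivAt (fun t : ℝ => genLaguerre m γ (-(ω * t ^ 2 / 2)))
      (dLag m γ (-(ω * t ^ 2 / 2)) * (-(ω * t))) t :=
    (hasDerivAt_genLaguerre m γ _).comp t (hz ω t)
  have hD : HasDerivAt (fun t : ℝ => dLag m γ (-(ω * t ^ 2 / 2)))
      (d2Lag m γ (-(ω * t ^ 2 / 2)) * (-(ω * t))) t :=
    (hasDerivAt_dLag m γ _).comp t (hz ω t)
  have hq : HasDerivAt (fun t : ℝ => β / t + ω * t / 2) (-(β / t ^ 2) + ω / 2) t := by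
    have h1 : HasDerivAt (fun t : ℝ => β / t) (β * (-(t ^ 2)⁻¹)) t := by
      simpa [div_eq_mul_inv] using (hasDerivAt_inv ht.ne').const_mul β
    have h2 : HasDerivAt (fun t : ℝ => ω * t / 2) (ω / 2) t := by
      simpa using ((hasDerivAt_id t).const_mul ω).div_const 2
    refine (h1.add h2).congr_deriv ?_
    field_simp
  have hlin : HasDerivAt (fun t : ℝ => -(ω * t)) (-ω) t := by
    exact (((hasDerivAt_id t).const_mul ω).neg).congr_deriv (by simp)
  have hG : HasDerivAt (fun t : ℝ =>
      (β / t + ω * t / 2) * genLaguerre m γ (-(ω * t ^ 2 / 2))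
        + (-(ω * t)) * dLag m γ (-(ω * t ^ 2 / 2)))
      ((-(β / t ^ 2) + ω / 2) * genLaguerre m γ (-(ω * t ^ 2 / 2))
        + (β / t + ω * t / 2) * (dLag m γ (-(ω * t ^ 2 / 2)) * (-(ω * t)))
        + ((-ω) * dLag m γ (-(ω * t ^ 2 / 2))
          + (-(ω * t)) * (d2Lag m γ (-(ω * t ^ 2 / 2)) * (-(ω * t))))) t :=
    (hq.mul hL).add (hlin.mul hD)
  have h := (hb.mul (hE ω t)).mul hG
  refine h.congr_deriv ?_
  simp only [Pi.mul_apply]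
  unfold psi2
  rw [Real.rpow_sub_one ht.ne']
  field_simp
  ring

end PsiDerivs

/-- For `α > 1/2`, `1 ≤ n < α + 1` and `ω > 0`, the function
`ψ_{−n}(x) = x^{−α+1/2} e^{ωx²/4} L_{n−1}^{−α}(−ωx²/2)` satisfies the Schrödinger
equation for the isotonic oscillator
`V(x) = (ω²/4)x² + (α+1/2)(α−1/2)/x² − ω(α+1)` with eigenvalue `−2nω` on `(0,∞)`. -/
theorem type3_seed_isotonic_oscillator (n : ℕ) (hn : 1 ≤ n) (α ω : ℝ)
    (hα : 1 / 2 < α) (hnα : (n : ℝ) < α + 1) (hω : 0 < ω) :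
    ∀ x ∈ Set.Ioi (0 : ℝ),
      -iteratedDeriv 2
          (fun t : ℝ => t ^ (-α + 1 / 2) * Real.exp (ω * t ^ 2 / 4) *
            genLaguerre (n - 1) (-α) (-(ω * t ^ 2 / 2))) x +
        (ω ^ 2 / 4 * x ^ 2 + (α + 1 / 2) * (α - 1 / 2) / x ^ 2 - ω * (α + 1)) *
          (x ^ (-α + 1 / 2) * Real.exp (ω * x ^ 2 / 4) *
            genLaguerre (n - 1) (-α) (-(ω * x ^ 2 / 2))) =
      -2 * (n : ℝ) * ω *
        (x ^ (-α + 1 / 2) * Real.exp (ω * x ^ 2 / 4) *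
          genLaguerre (n - 1) (-α) (-(ω * x ^ 2 / 2))) := by
  intro x hx
  replace hx : 0 < x := hx
  set m : ℕ := n - 1 with hm
  set γ : ℝ := -α with hγ
  set β : ℝ := -α + 1 / 2 with hβ
  have hfun : (fun t : ℝ => t ^ (-α + 1 / 2) * Real.exp (ω * t ^ 2 / 4) *
      genLaguerre (n - 1) (-α) (-(ω * t ^ 2 / 2))) = psi m γ β ω := rfl
  have hit : iteratedDeriv 2 (psi m γ β ω) x = psi2 m γ β ω x := by
    have h21 : (2 : ℕ) = 1 + 1 := rfl
    rw [h21, iteratedDeriv_succ, iteratedDeriv_one]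
    have hev : deriv (psi m γ β ω) =ᶠ[nhds x] psi1 m γ β ω :=
      Filter.eventually_of_mem (Ioi_mem_nhds hx)
        (fun t ht => (hasDerivAt_psi1 m γ β ω ht).deriv)
    rw [hev.deriv_eq, (hasDerivAt_psi2 m γ β ω hx).deriv]
  rw [hfun, hit]
  have hode := laguerre_ode m γ (-(ω * x ^ 2 / 2))
  have hmn : ((m : ℕ) : ℝ) = (n : ℝ) - 1 := by
    rw [hm, Nat.cast_sub hn]; simp
  rw [hmn] at hode
  unfold psi2
  set L := genLaguerre m γ (-(ω * x ^ 2 / 2))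
  set D := dLag m γ (-(ω * x ^ 2 / 2))
  set D2 := d2Lag m γ (-(ω * x ^ 2 / 2))
  set P := x ^ β
  set E := Real.exp (ω * x ^ 2 / 4)
  have hx0 : x ≠ 0 := hx.ne'
  rw [hβ, hγ] at *
  field_simp
  linear_combination (32 * ω * x ^ 2 * P * E) * hode
end
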